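/- Let n, m be non-negative integers with n < m. Then Σ_{i=0}^{n} ((−1)^i / (m−i)) · C(n,i) · C(m−i,n) equals 1/m if n = 0, and equals 0 if n ≥ 1. -/

import Mathlib

lemma diff_step (n : ℕ) (f : ℕ → ℚ) :
    ∑ i ∈ Finset.range (n + 2), (-1:ℚ)^i * ((n+1).choose i : ℚ) * f i
      = ∑ i ∈ Finset.range (n + 1), (-1:ℚ)^i * (n.choose i : ℚ) * (f i - f (i+1)) := by
  have h := Finset.sum_choose_succ_mul (fun i _ => (-1:ℚ)^i * f i) n
  calc ∑ i ∈ Finset.range (n + 2), (-1:ℚ)^i * ((n+1).choose i : ℚ) * f i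
      = ∑ i ∈ Finset.range (n + 2), ((n+1).choose i : ℚ) * ((-1:ℚ)^i * f i) :=
        Finset.sum_congr rfl fun i _ => by ring
    _ = (∑ i ∈ Finset.range (n + 1), (n.choose i : ℚ) * ((-1:ℚ)^i * f i))
        + ∑ i ∈ Finset.range (n + 1), (n.choose i : ℚ) * ((-1:ℚ)^(i+1) * f (i+1)) := h
    _ = ∑ i ∈ Finset.range (n + 1), (-1:ℚ)^i * (n.choose i : ℚ) * (f i - f (i+1)) := by
        rw [← Finset.sum_add_distrib]
        exact Finset.sum_congr rfl fun i _ => by rw [pow_succ]; ring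

lemma key (k : ℕ) : ∀ M : ℕ, k + 1 ≤ M →
    ∑ i ∈ Finset.range (k + 2), (-1:ℚ)^i * ((k+1).choose i : ℚ) * ((M - i).choose k : ℚ) = 0 := by
  induction k with
  | zero =>
    intro M hM
    simp [Finset.sum_range_succ]
  | succ k ih =>
    intro M hM
    rw [diff_step (k+1) (fun i => ((M - i).choose (k+1) : ℚ))]
    have hc : ∀ i ∈ Finset.range (k + 2),
        (-1:ℚ)^i * ((k+1).choose i : ℚ) * (((M - i).choose (k+1) : ℚ) - ((M - (i+1)).choose (k+1) : ℚ))
        = (-1:ℚ)^i * ((k+1).choose i : ℚ) * (((M - 1 - i).choose k : ℚ)) := by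
      intro i hi
      simp only [Finset.mem_range] at hi
      have h2 : M - i = (M - (i+1)) + 1 := by omega
      have h3 : M - 1 - i = M - (i+1) := by omega
      rw [h2, h3, Nat.choose_succ_succ]
      push_cast
      ring
    rw [Finset.sum_congr rfl hc]
    exact ih (M - 1) (by omega)

theorem alternating_binomial_fraction_sum
    (n m : ℕ) (h : n < m) :
    ∑ i ∈ Finset.range (n + 1),
        ((-1 : ℚ) ^ i / ((m : ℚ) - (i : ℚ))) * (n.choose i : ℚ) * ((m - i).choose n : ℚ) =
      if n = 0 then 1 / (m : ℚ) else 0 := by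
  cases n with
  | zero => simp
  | succ k =>
    rw [if_neg (Nat.succ_ne_zero k)]
    have hstep : ∀ i ∈ Finset.range (k + 2),
        ((-1 : ℚ) ^ i / ((m : ℚ) - (i : ℚ))) * ((k+1).choose i : ℚ) * ((m - i).choose (k+1) : ℚ)
        = (1 / ((k:ℚ)+1)) * ((-1:ℚ)^i * ((k+1).choose i : ℚ) * ((m - 1 - i).choose k : ℚ)) := by
      intro i hi
      simp only [Finset.mem_range] at hi
      have h2 : m - i = (m - (i+1)) + 1 := by omega
      have h3 : m - 1 - i = m - (i+1) := by omega
      have h4 : ((m:ℚ) - (i:ℚ)) = ((m - i : ℕ) : ℚ) := by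
        rw [Nat.cast_sub (by omega : i ≤ m)]
      have h5 : (m - i) * (m - (i+1)).choose k = (m - i).choose (k+1) * (k+1) := by
        rw [h2]; exact Nat.add_one_mul_choose_eq _ k
      have hq : ((m - i : ℕ) : ℚ) * ((m - (i+1)).choose k : ℚ)
          = ((m - i).choose (k+1) : ℚ) * ((k:ℚ)+1) := by exact_mod_cast h5
      have h6 : ((m - i : ℕ) : ℚ) ≠ 0 := by
        rw [h2]; push_cast; positivity
      have h7 : ((k:ℚ)+1) ≠ 0 := by positivity
      rw [h4, h3]
      field_simp
      linear_combination (-((k+1).choose i : ℚ)) * hq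
    rw [Finset.sum_congr rfl hstep, ← Finset.mul_sum, key k (m-1) (by omega), mul_zero]
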